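/- Fix b > 0. Let (g_k)_{k ≥ 1} be an i.i.d. sequence of Gamma(b, 1) random variables on a probability space and let ξ = (2π²)⁻¹ ∑_{k=1}^{∞} g_k / (k − 1/2)². Then for every t ≥ 0, the Laplace transform of ξ is E[exp(−tξ)] = (cosh √(t/2))^{−b}. -/

import Mathlib

open Real MeasureTheory ProbabilityTheory
open scoped ENNReal

open Filter Finset Topology in
private lemma pg_prod_split (w : ℂ) (n : ℕ) :
    ∏ j ∈ Finset.range (2 * n), (1 - (2*w) ^ 2 / ((j : ℂ) + 1) ^ 2) =
      (∏ j ∈ Finset.range n, (1 - w ^ 2 / ((j : ℂ) + 1) ^ 2)) *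
        ∏ m ∈ Finset.range n, (1 - (2*w) ^ 2 / (2 * (m : ℂ) + 1) ^ 2) := by
  induction n with
  | zero => simp
  | succ n ih =>
    have h2 : 2 * (n + 1) = (2 * n) + 1 + 1 := by ring
    rw [h2, Finset.prod_range_succ, Finset.prod_range_succ, ih,
      Finset.prod_range_succ, Finset.prod_range_succ]
    have hn1 : ((n : ℂ) + 1) ≠ 0 := by exact_mod_cast (Nat.cast_add_one_ne_zero n (R := ℂ))
    have e1 : (1 - (2*w) ^ 2 / (((2 * n : ℕ) : ℂ) + 1) ^ 2)
        = (1 - (2*w) ^ 2 / (2 * (n : ℂ) + 1) ^ 2) := by push_cast; ring_nf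
    have e2 : (1 - (2*w) ^ 2 / (((2 * n + 1 : ℕ) : ℂ) + 1) ^ 2)
        = (1 - w ^ 2 / ((n : ℂ) + 1) ^ 2) := by
      push_cast
      have h22 : ((2:ℂ) * n + 1 + 1) = 2 * ((n:ℂ)+1) := by ring
      rw [h22]
      field_simp
    rw [e1, e2]; ring

open Filter Finset Topology in
private lemma pg_cosh_prod {x : ℝ} (hx : 0 ≤ x) :
    Tendsto (fun n : ℕ => ∏ j ∈ Finset.range n, (1 + x ^ 2 / (((j : ℝ) + 1/2) ^ 2 * π ^ 2)))
      atTop (𝓝 (Real.cosh x)) := by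
  rcases hx.eq_or_lt with rfl | hx
  · simpa using (tendsto_const_nhds : Tendsto (fun _ : ℕ => (1:ℝ)) atTop (𝓝 1))
  set w : ℂ := Complex.I * x / π with hw
  have hπ : (π : ℂ) ≠ 0 := by exact_mod_cast Real.pi_ne_zero
  have hπw : (π : ℂ) * w = Complex.I * x := by rw [hw]; field_simp
  have hw2 : w ^ 2 = -((x : ℂ) ^ 2 / (π : ℂ) ^ 2) := by
    rw [hw]; field_simp; ring_nf; rw [Complex.I_sq]; ring
  have hsin : Complex.sin ((π : ℂ) * w) = Real.sinh x * Complex.I := by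
    rw [hπw, mul_comm Complex.I (x:ℂ), Complex.sin_mul_I, Complex.ofReal_sinh]
  have hsinh : Real.sinh x ≠ 0 := ne_of_gt (by positivity)
  have hsin_ne : Complex.sin ((π : ℂ) * w) ≠ 0 := by
    rw [hsin]
    exact mul_ne_zero (Complex.ofReal_ne_zero.mpr hsinh) Complex.I_ne_zero
  have h1 := Complex.tendsto_euler_sin_prod w
  have h2 := (Complex.tendsto_euler_sin_prod (2 * w)).comp
    (tendsto_id.const_mul_atTop' (zero_lt_two) : Tendsto (fun n : ℕ => 2 * n) atTop atTop)
  have hfaceq : ∀ j : ℕ, (((1 + x ^ 2 / (π ^ 2 * ((j:ℝ)+1) ^ 2) : ℝ)) : ℂ)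
      = 1 - w ^ 2 / ((j : ℂ) + 1) ^ 2 := by
    intro j
    have hj : ((j : ℂ) + 1) ≠ 0 := by exact_mod_cast (Nat.cast_add_one_ne_zero j (R := ℂ))
    rw [hw2]
    push_cast
    field_simp
    ring
  have hfac : ∀ j : ℕ, (1 : ℂ) - w ^ 2 / ((j : ℂ) + 1) ^ 2 ≠ 0 := by
    intro j
    rw [← hfaceq j]
    exact_mod_cast ne_of_gt (by positivity : (0:ℝ) < 1 + x ^ 2 / (π ^ 2 * ((j:ℝ)+1) ^ 2))
  have hP1ne : ∀ n : ℕ, (π : ℂ) * w * ∏ j ∈ Finset.range n, (1 - w ^ 2 / ((j : ℂ) + 1) ^ 2) ≠ 0 := by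
    intro n
    refine mul_ne_zero ?_ (Finset.prod_ne_zero_iff.2 fun j _ => hfac j)
    rw [hπw]
    exact mul_ne_zero Complex.I_ne_zero (Complex.ofReal_ne_zero.mpr hx.ne')
  have h3 : Tendsto (fun n : ℕ =>
      ((π : ℂ) * (2*w) * ∏ j ∈ Finset.range (2*n), (1 - (2*w) ^ 2 / ((j : ℂ) + 1) ^ 2)) /
        (2 * ((π : ℂ) * w * ∏ j ∈ Finset.range n, (1 - w ^ 2 / ((j : ℂ) + 1) ^ 2))))
      atTop (𝓝 (Complex.sin ((π : ℂ) * (2*w)) / (2 * Complex.sin ((π : ℂ) * w)))) :=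
    h2.div (h1.const_mul 2) (by simpa using hsin_ne)
  have hlim : Complex.sin ((π : ℂ) * (2*w)) / (2 * Complex.sin ((π : ℂ) * w))
      = ((Real.cosh x : ℝ) : ℂ) := by
    have h2w : (π : ℂ) * (2 * w) = 2 * ((π:ℂ)*w) := by ring
    rw [h2w, Complex.sin_two_mul, mul_comm (2 * Complex.sin ((π:ℂ)*w)),
      mul_div_assoc, div_self (by simpa using hsin_ne), mul_one, hπw,
      mul_comm Complex.I (x:ℂ), Complex.cos_mul_I, Complex.ofReal_cosh]
  rw [hlim] at h3
  have hquot : ∀ n : ℕ,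
      ((π : ℂ) * (2*w) * ∏ j ∈ Finset.range (2*n), (1 - (2*w) ^ 2 / ((j : ℂ) + 1) ^ 2)) /
        (2 * ((π : ℂ) * w * ∏ j ∈ Finset.range n, (1 - w ^ 2 / ((j : ℂ) + 1) ^ 2)))
      = ∏ m ∈ Finset.range n, (1 - (2*w) ^ 2 / (2 * (m : ℂ) + 1) ^ 2) := by
    intro n
    rw [pg_prod_split w n]
    rw [div_eq_iff (by simpa using hP1ne n)]
    ring
  simp_rw [hquot] at h3
  have hre : ∀ n : ℕ, (((∏ j ∈ Finset.range n, (1 + x ^ 2 / (((j : ℝ) + 1/2) ^ 2 * π ^ 2)) : ℝ)) : ℂ)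
      = ∏ m ∈ Finset.range n, (1 - (2*w) ^ 2 / (2 * (m : ℂ) + 1) ^ 2) := by
    intro n
    push_cast
    refine Finset.prod_congr rfl fun m _ => ?_
    have hm : (2 * (m : ℂ) + 1) ≠ 0 := by
      have h := Nat.cast_ne_zero (R := ℂ) (n := 2 * m + 1) |>.mpr (by omega)
      push_cast at h
      convert h using 2
    have h2w2 : (2*w) ^ 2 = -(4 * (x : ℂ) ^ 2 / (π : ℂ) ^ 2) := by rw [mul_pow, hw2]; ring
    have hm2 : ((m : ℂ) + 1/2) ≠ 0 := by
      intro h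
      apply hm
      linear_combination 2 * h
    have hne1 : ((2*(m:ℂ)+1)^2 : ℂ) ≠ 0 := pow_ne_zero _ hm
    have hne2 : (((m:ℂ)+1/2)^2*(π:ℂ)^2) ≠ 0 :=
      mul_ne_zero (pow_ne_zero _ hm2) (pow_ne_zero _ hπ)
    have key : -(4*(x:ℂ)^2/(π:ℂ)^2) / (2*(m:ℂ)+1)^2 = -((x:ℂ)^2/(((m:ℂ)+1/2)^2*(π:ℂ)^2)) := by
      rw [neg_div, neg_inj, div_div, div_eq_div_iff (mul_ne_zero (pow_ne_zero 2 hπ) hne1) hne2]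
      ring
    rw [h2w2, key, sub_neg_eq_add]
  have h4 : Tendsto (fun n : ℕ => (((∏ j ∈ Finset.range n,
      (1 + x ^ 2 / (((j : ℝ) + 1/2) ^ 2 * π ^ 2)) : ℝ)) : ℂ)) atTop (𝓝 ((Real.cosh x : ℝ) : ℂ)) := by
    simpa only [hre] using h3
  have h5 := (Complex.continuous_re.tendsto (((Real.cosh x : ℝ) : ℂ))).comp h4
  rw [Complex.ofReal_re] at h5
  exact Tendsto.congr (fun n => Complex.ofReal_re _) h5

private lemma pg_gammaPDF_mul_exp (b : ℝ) (hb : 0 < b) {s : ℝ} (hs : 0 ≤ s) (x : ℝ) :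
    gammaPDF b 1 x * ENNReal.ofReal (Real.exp (-(s * x)))
      = ENNReal.ofReal ((1 + s) ^ (-b)) * gammaPDF b (1 + s) x := by
  have h1s : (0:ℝ) < 1 + s := by linarith
  rcases le_or_gt 0 x with hx | hx
  · rw [gammaPDF_of_nonneg hx, gammaPDF_of_nonneg hx,
      ← ENNReal.ofReal_mul (by positivity), ← ENNReal.ofReal_mul (by positivity)]
    congr 1
    have hpow : (1 + s) ^ (-b) * (1 + s) ^ b = 1 := by
      rw [← Real.rpow_add h1s]; simp
    have hexp : Real.exp (-(1 * x)) * Real.exp (-(s * x)) = Real.exp (-((1 + s) * x)) := by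
      rw [← Real.exp_add]; ring_nf
    rw [Real.one_rpow]
    linear_combination (-(x ^ (b-1) / Real.Gamma b) * Real.exp (-((1+s)*x))) * hpow
      + (x ^ (b-1) / Real.Gamma b) * hexp
  · rw [gammaPDF_of_neg hx, gammaPDF_of_neg hx, zero_mul, mul_zero]

private lemma pg_gamma_laplace (b : ℝ) (hb : 0 < b) {s : ℝ} (hs : 0 ≤ s) :
    ∫ x, Real.exp (-(s * x)) ∂(gammaMeasure b 1) = (1 + s) ^ (-b) := by
  have h1s : (0:ℝ) < 1 + s := by linarith
  rw [integral_eq_lintegral_of_nonneg_ae (ae_of_all _ fun x => (Real.exp_nonneg _))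
    ((by fun_prop : Measurable fun x : ℝ => Real.exp (-(s * x))).aestronglyMeasurable)]
  have hm : Measurable (gammaPDF b 1) := (measurable_gammaPDFReal b 1).ennreal_ofReal
  rw [gammaMeasure, lintegral_withDensity_eq_lintegral_mul _
    hm (by fun_prop : Measurable fun x : ℝ => ENNReal.ofReal (Real.exp (-(s * x))))]
  have : ∀ x : ℝ, (gammaPDF b 1 * fun x => ENNReal.ofReal (Real.exp (-(s * x)))) x
      = ENNReal.ofReal ((1 + s) ^ (-b)) * gammaPDF b (1 + s) x :=
    fun x => pg_gammaPDF_mul_exp b hb hs x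
  have hm2 : Measurable (gammaPDF b (1+s)) := (measurable_gammaPDFReal b (1+s)).ennreal_ofReal
  rw [lintegral_congr this, lintegral_const_mul _ hm2,
    lintegral_gammaPDF_eq_one hb h1s, mul_one, ENNReal.toReal_ofReal (by positivity)]

private lemma pg_gammaPDF_mul_id (b : ℝ) (hb : 0 < b) (x : ℝ) :
    gammaPDF b 1 x * ENNReal.ofReal x = ENNReal.ofReal b * gammaPDF (b + 1) 1 x := by
  rcases le_or_gt 0 x with hx | hx
  · rw [gammaPDF_of_nonneg hx, gammaPDF_of_nonneg hx,
      ← ENNReal.ofReal_mul (by positivity), ← ENNReal.ofReal_mul hb.le]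
    congr 1
    rw [Real.one_rpow, Real.one_rpow, Real.Gamma_add_one hb.ne']
    rcases hx.eq_or_lt with rfl | hx0
    · rw [Real.zero_rpow (by linarith : b + 1 - 1 ≠ 0)]
      simp
    · rw [show b + 1 - 1 = (b - 1) + 1 by ring, Real.rpow_add_one hx0.ne']
      field_simp
  · rw [gammaPDF_of_neg hx, gammaPDF_of_neg hx, zero_mul, mul_zero]

private lemma pg_gamma_mean (b : ℝ) (hb : 0 < b) :
    ∫⁻ x, ENNReal.ofReal x ∂(gammaMeasure b 1) = ENNReal.ofReal b := by
  have hm : Measurable (gammaPDF b 1) := (measurable_gammaPDFReal b 1).ennreal_ofReal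
  rw [gammaMeasure, lintegral_withDensity_eq_lintegral_mul _ hm measurable_id'.ennreal_ofReal]
  have : ∀ x : ℝ, (gammaPDF b 1 * fun x => ENNReal.ofReal x) x
      = ENNReal.ofReal b * gammaPDF (b + 1) 1 x := fun x => pg_gammaPDF_mul_id b hb x
  have hm2 : Measurable (gammaPDF (b+1) 1) := (measurable_gammaPDFReal (b+1) 1).ennreal_ofReal
  rw [lintegral_congr this, lintegral_const_mul _ hm2,
    lintegral_gammaPDF_eq_one (by linarith) one_pos, mul_one]

/-- The Pólya-Gamma `PG(b, 0)` random variable built from an i.i.d. sequence `(g_k)_{k≥1}` of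
`Gamma(b, 1)` variables: `ξ = (2π²)⁻¹ ∑_{k=1}^∞ g_k / (k − 1/2)²` (indexing `k − 1` by `ℕ`). -/
noncomputable def polyaGamma {Ω : Type*} (g : ℕ → Ω → ℝ) (ω : Ω) : ℝ :=
  (2 * π ^ 2)⁻¹ * ∑' k : ℕ, g k ω / ((k : ℝ) + 1/2) ^ 2

open Filter Finset Topology in
/-- The Laplace transform of a Pólya-Gamma `PG(b, 0)` random variable: for `b > 0` and `t ≥ 0`,
`E[exp(−tξ)] = (cosh √(t/2))^{−b}`. -/
theorem polyaGamma_laplace_transform {Ω : Type*} [MeasurableSpace Ω] (μ : Measure Ω)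
    [IsProbabilityMeasure μ] (b : ℝ) (hb : 0 < b)
    (g : ℕ → Ω → ℝ) (hgmeas : ∀ k, Measurable (g k))
    (hindep : iIndepFun g μ)
    (hdist : ∀ k, Measure.map (g k) μ = gammaMeasure b 1) :
    ∀ t : ℝ, 0 ≤ t →
      ∫ ω, Real.exp (-t * polyaGamma g ω) ∂μ
        = (Real.cosh (Real.sqrt (t / 2))) ^ (-b) := by
  intro t ht
  have hπ : (0:ℝ) < π := Real.pi_pos
  set c : ℝ := (2 * π ^ 2)⁻¹ with hc
  have hcpos : 0 < c := by positivity
  set a : ℕ → ℝ := fun k => ((k:ℝ) + 1/2) ^ 2 with ha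
  have hapos : ∀ k, 0 < a k := fun k => by rw [ha]; positivity
  set s : ℕ → ℝ := fun k => t * c / a k with hs
  have hs0 : ∀ k, 0 ≤ s k := fun k =>
    div_nonneg (mul_nonneg ht hcpos.le) (hapos k).le
  set x : ℝ := Real.sqrt (t/2) with hxdef
  have hx0 : 0 ≤ x := Real.sqrt_nonneg _
  have hx2 : x ^ 2 = t / 2 := Real.sq_sqrt (by linarith)
  -- Laplace transform of each coordinate
  have hint : ∀ k, ∫ ω, Real.exp (-(s k * g k ω)) ∂μ = (1 + s k) ^ (-b) := by
    intro k
    have hms : AEStronglyMeasurable (fun y : ℝ => Real.exp (-(s k * y))) (Measure.map (g k) μ) :=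
      ((measurable_id'.const_mul (s k)).neg.exp).aestronglyMeasurable
    rw [← integral_map (hgmeas k).aemeasurable hms, hdist k, pg_gamma_laplace b hb (hs0 k)]
  -- a.s. nonnegativity
  have hpos : ∀ᵐ ω ∂μ, ∀ k, 0 ≤ g k ω := by
    rw [ae_all_iff]
    intro k
    have hmap : μ {ω | g k ω < 0} = Measure.map (g k) μ (Set.Iio 0) := by
      rw [Measure.map_apply (hgmeas k) measurableSet_Iio]; rfl
    have hz : Measure.map (g k) μ (Set.Iio 0) = 0 := by
      rw [hdist k, gammaMeasure, withDensity_apply _ measurableSet_Iio]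
      exact lintegral_gammaPDF_of_nonpos le_rfl
    have h0 : μ {ω | g k ω < 0} = 0 := hmap.trans hz
    rw [ae_iff]
    simpa [not_le] using h0
  -- a.s. summability
  set F : ℕ → Ω → ℝ≥0∞ := fun k ω => ENNReal.ofReal (g k ω / a k) with hF
  have hFmeas : ∀ k, Measurable (F k) := fun k => ((hgmeas k).div_const _).ennreal_ofReal
  have hsum_a : Summable (fun k : ℕ => b / a k) := by
    have h2 : Summable (fun n : ℕ => 1 / ((n:ℝ)) ^ 2) :=
      summable_one_div_nat_pow.mpr one_lt_two
    have h1 : Summable (fun n : ℕ => 1 / ((n:ℝ)+1) ^ 2) := by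
      have h3 := (summable_nat_add_iff 1).mpr h2
      refine h3.congr fun n => ?_
      push_cast
      ring
    have h4 : Summable (fun k : ℕ => 4 * b / ((k:ℝ)+1) ^ 2) := by
      have := h1.mul_left (4*b)
      simpa [mul_one_div, div_eq_mul_inv] using this
    refine h4.of_nonneg_of_le (fun k => div_nonneg hb.le (hapos k).le) (fun k => ?_)
    rw [div_le_div_iff₀ (hapos k) (by positivity), ha]
    have hk : (0:ℝ) ≤ (k:ℝ) := Nat.cast_nonneg k
    nlinarith [mul_nonneg (mul_nonneg hb.le hk) hk, mul_nonneg hb.le hk]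
  have hFlint : ∀ k, ∫⁻ ω, F k ω ∂μ = ENNReal.ofReal (b / a k) := by
    intro k
    calc ∫⁻ ω, ENNReal.ofReal (g k ω / a k) ∂μ
        = ∫⁻ y, ENNReal.ofReal (y / a k) ∂(Measure.map (g k) μ) :=
          (lintegral_map ((measurable_id'.div_const _).ennreal_ofReal) (hgmeas k)).symm
      _ = ∫⁻ y, ENNReal.ofReal y * (ENNReal.ofReal (a k))⁻¹ ∂(gammaMeasure b 1) := by
          rw [hdist k]
          refine lintegral_congr fun y => ?_
          rw [ENNReal.ofReal_div_of_pos (hapos k), div_eq_mul_inv]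
      _ = (∫⁻ y, ENNReal.ofReal y ∂(gammaMeasure b 1)) * (ENNReal.ofReal (a k))⁻¹ :=
          lintegral_mul_const _ measurable_id'.ennreal_ofReal
      _ = ENNReal.ofReal b * (ENNReal.ofReal (a k))⁻¹ := by rw [pg_gamma_mean b hb]
      _ = ENNReal.ofReal (b / a k) := by
          rw [ENNReal.ofReal_div_of_pos (hapos k), div_eq_mul_inv]
  have hfin : ∫⁻ ω, ∑' k, F k ω ∂μ ≠ ⊤ := by
    rw [lintegral_tsum (fun k => (hFmeas k).aemeasurable)]
    simp_rw [hFlint]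
    rw [← ENNReal.ofReal_tsum_of_nonneg (fun k => div_nonneg hb.le (hapos k).le) hsum_a]
    exact ENNReal.ofReal_ne_top
  have hsummable : ∀ᵐ ω ∂μ, Summable fun k => g k ω / a k := by
    filter_upwards [hpos, ae_lt_top (Measurable.ennreal_tsum hFmeas) hfin] with ω hω hfinω
    have h1 := ENNReal.summable_toReal hfinω.ne
    refine h1.congr fun k => ?_
    exact ENNReal.toReal_ofReal (div_nonneg (hω k) (hapos k).le)
  -- independence product
  set X : ℕ → Ω → ℝ := fun k ω => -(s k) * g k ω with hX
  have hXmeas : ∀ k, Measurable (X k) := fun k => (hgmeas k).const_mul _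
  have hXindep : iIndepFun X μ :=
    hindep.comp (fun k => fun y => -(s k) * y) (fun k => measurable_id'.const_mul _)
  have hprod : ∀ n, ∫ ω, Real.exp ((∑ k ∈ Finset.range n, X k) ω) ∂μ
      = ∏ k ∈ Finset.range n, (1 + s k) ^ (-b) := by
    intro n
    have hmgf := hXindep.mgf_sum hXmeas (Finset.range n) (t := 1)
    have h1 : ∫ ω, Real.exp ((∑ k ∈ Finset.range n, X k) ω) ∂μ
        = mgf (∑ k ∈ Finset.range n, X k) μ 1 := by
      simp [mgf]
    rw [h1, hmgf]
    refine Finset.prod_congr rfl fun k _ => ?_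
    have h2 : mgf (X k) μ 1 = ∫ ω, Real.exp (-(s k * g k ω)) ∂μ := by
      simp [mgf, hX, neg_mul]
    rw [h2, hint k]
  -- limit of the products
  have hsk_eq : ∀ k : ℕ, 1 + s k = 1 + x ^ 2 / (((k:ℝ) + 1/2) ^ 2 * π ^ 2) := by
    intro k
    rw [hs, hc, ha, hx2]
    congr 1
    rw [← div_eq_mul_inv]
    show t / (2*π^2) / (((k:ℝ)+1/2)^2) = t/2/(((k:ℝ)+1/2)^2*π^2)
    rw [div_div, div_div]
    congr 1
    ring
  have hRHS : Tendsto (fun n => ∏ k ∈ Finset.range n, (1 + s k) ^ (-b)) atTop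
      (𝓝 ((Real.cosh x) ^ (-b))) := by
    have h1 : Tendsto (fun n => ∏ k ∈ Finset.range n, (1 + s k)) atTop (𝓝 (Real.cosh x)) :=
      (pg_cosh_prod hx0).congr fun n => Finset.prod_congr rfl fun k _ => (hsk_eq k).symm
    have h2 := h1.rpow_const (p := -b) (Or.inl (ne_of_gt (Real.cosh_pos _)))
    refine h2.congr fun n => ?_
    exact (Real.finset_prod_rpow (Finset.range n) (fun k => 1 + s k)
      (fun k _ => by positivity) (-b)).symm
  -- dominated convergence
  have hDCT : Tendsto (fun n => ∫ ω, Real.exp ((∑ k ∈ Finset.range n, X k) ω) ∂μ) atTop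
      (𝓝 (∫ ω, Real.exp (-t * polyaGamma g ω) ∂μ)) := by
    refine tendsto_integral_of_dominated_convergence (fun _ => (1:ℝ)) ?_ (integrable_const 1)
      ?_ ?_
    · intro n
      have hmeas : Measurable fun ω => (∑ k ∈ Finset.range n, X k) ω := by
        simp only [Finset.sum_apply]
        exact Finset.measurable_sum _ (fun k _ => hXmeas k)
      exact hmeas.exp.aestronglyMeasurable
    · intro n
      filter_upwards [hpos] with ω hω
      rw [Real.norm_eq_abs, abs_of_pos (Real.exp_pos _), Real.exp_le_one_iff,
        Finset.sum_apply]
      refine Finset.sum_nonpos fun k _ => ?_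
      simp only [hX, neg_mul]
      exact neg_nonpos.mpr (mul_nonneg (hs0 k) (hω k))
    · filter_upwards [hsummable] with ω hsumω
      have hps : Tendsto (fun n => ∑ k ∈ Finset.range n, g k ω / a k) atTop
          (𝓝 (∑' k, g k ω / a k)) := hsumω.hasSum.tendsto_sum_nat
      have h2 : Tendsto (fun n => -(t*c) * ∑ k ∈ Finset.range n, g k ω / a k) atTop
          (𝓝 (-(t*c) * ∑' k, g k ω / a k)) := hps.const_mul _
      have h3 := (Real.continuous_exp.tendsto _).comp h2
      have heq : -t * polyaGamma g ω = -(t*c) * ∑' k, g k ω / a k := by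
        simp only [polyaGamma, ha, hc]
        ring
      rw [← heq] at h3
      refine h3.congr fun n => ?_
      simp only [Function.comp_apply, Finset.sum_apply]
      congr 1
      rw [Finset.mul_sum]
      refine Finset.sum_congr rfl fun k _ => ?_
      rw [hX, hs]
      have := (hapos k).ne'
      field_simp
  exact tendsto_nhds_unique (hDCT.congr hprod) hRHS
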